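/- Let G be a (claw, co-claw)-free graph. If G contains a triangle and an independent set of size 3 that are vertex-disjoint, then G contains an induced net or an induced 3-sun. -/

import Mathlib

open SimpleGraph

/-- `H` occurs as an induced subgraph of `G`. -/
def HasInducedCopy {V W : Type*} (G : SimpleGraph V) (H : SimpleGraph W) : Prop :=
  ∃ f : W ↪ V, ∀ a b, H.Adj a b ↔ G.Adj (f a) (f b)

/-- The graph on `Fin n` with the given edge list. -/
def listGraph (n : ℕ) (l : List (Fin n × Fin n)) : SimpleGraph (Fin n) :=
  SimpleGraph.fromRel (fun a b => (a, b) ∈ l)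

/-- The claw `K_{1,3}`. -/
def clawGraph : SimpleGraph (Fin 4) := listGraph 4 [(0,1),(0,2),(0,3)]

/-- The co-claw: the complement of the claw (a triangle plus an isolated vertex). -/
def coclawGraph : SimpleGraph (Fin 4) := clawGraphᶜ

/-- The net: a triangle `0,1,2` with pendant vertices `3,4,5`, where `3+i` is
adjacent exactly to `i`. -/
def netGraph : SimpleGraph (Fin 6) := listGraph 6 [(0,1),(0,2),(1,2),(0,3),(1,4),(2,5)]

/-- The 3-sun: the complement of the net. -/
def sunGraph : SimpleGraph (Fin 6) := netGraphᶜ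

/-- The bull: a triangle `0,1,2` with pendant vertices `3` (adjacent to `0`)
and `4` (adjacent to `1`). -/
def bullGraph : SimpleGraph (Fin 5) := listGraph 5 [(0,1),(0,2),(1,2),(0,3),(1,4)]

/-- `{a, b, c}` is an asteroidal triple of `G`: an independent set of three
vertices such that any two of them are joined by a path avoiding the closed
neighbourhood of the third. -/
def IsAT {V : Type*} (G : SimpleGraph V) (a b c : V) : Prop :=
  a ≠ b ∧ a ≠ c ∧ b ≠ c ∧ ¬G.Adj a b ∧ ¬G.Adj a c ∧ ¬G.Adj b c ∧
  (∃ p : G.Walk a b, ∀ x ∈ p.support, x ≠ c ∧ ¬G.Adj c x) ∧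
  (∃ p : G.Walk a c, ∀ x ∈ p.support, x ≠ b ∧ ¬G.Adj b x) ∧
  (∃ p : G.Walk b c, ∀ x ∈ p.support, x ≠ a ∧ ¬G.Adj a x)

/-- A graph is AT-free if it contains no asteroidal triple. -/
def ATFree {V : Type*} (G : SimpleGraph V) : Prop := ∀ a b c : V, ¬ IsAT G a b c

/-- A unit interval graph: vertices are unit intervals `[f v, f v + 1]` on the
real line, and distinct vertices are adjacent iff their intervals intersect. -/
def IsUnitIntervalGraph {V : Type*} (G : SimpleGraph V) : Prop :=
  ∃ f : V → ℝ, ∀ u v : V, G.Adj u v ↔ u ≠ v ∧ |f u - f v| ≤ 1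

instance (n : ℕ) (l : List (Fin n × Fin n)) : DecidableRel (listGraph n l).Adj :=
  fun u v => decidable_of_iff _ (SimpleGraph.fromRel_adj _ u v).symm
instance : DecidableRel clawGraph.Adj := by unfold clawGraph; infer_instance
instance : DecidableRel coclawGraph.Adj := by unfold coclawGraph; infer_instance
instance : DecidableRel netGraph.Adj := by unfold netGraph; infer_instance
instance : DecidableRel sunGraph.Adj := by unfold sunGraph; infer_instance

lemma claw_of {V : Type*} (G : SimpleGraph V) {x0 x1 x2 x3 : V}
    (h01 : G.Adj x0 x1) (h02 : G.Adj x0 x2) (h03 : G.Adj x0 x3)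
    (n12 : ¬G.Adj x1 x2) (n13 : ¬G.Adj x1 x3) (n23 : ¬G.Adj x2 x3)
    (d12 : x1 ≠ x2) (d13 : x1 ≠ x3) (d23 : x2 ≠ x3) :
    HasInducedCopy G clawGraph := by
  have h10 := h01.symm; have h20 := h02.symm; have h30 := h03.symm
  have n21 : ¬G.Adj x2 x1 := fun h => n12 h.symm
  have n31 : ¬G.Adj x3 x1 := fun h => n13 h.symm
  have n32 : ¬G.Adj x3 x2 := fun h => n23 h.symm
  have d01 := h01.ne; have d02 := h02.ne; have d03 := h03.ne
  have d10 := d01.symm; have d20 := d02.symm; have d30 := d03.symm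
  have d21 := d12.symm; have d31 := d13.symm; have d32 := d23.symm
  have l0 := G.irrefl (v := x0); have l1 := G.irrefl (v := x1)
  have l2 := G.irrefl (v := x2); have l3 := G.irrefl (v := x3)
  refine ⟨⟨![x0,x1,x2,x3], ?_⟩, ?_⟩
  · intro u v h
    fin_cases u <;> fin_cases v <;>
      first
      | rfl
      | exact absurd h (by assumption)
  · intro u v
    fin_cases u <;> fin_cases v <;>
      first
      | exact iff_of_true (by decide) (by assumption)
      | exact iff_of_false (by decide) (by assumption)

lemma coclaw_of {V : Type*} (G : SimpleGraph V) {x0 x1 x2 x3 : V}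
    (h12 : G.Adj x1 x2) (h13 : G.Adj x1 x3) (h23 : G.Adj x2 x3)
    (n01 : ¬G.Adj x0 x1) (n02 : ¬G.Adj x0 x2) (n03 : ¬G.Adj x0 x3)
    (d01 : x0 ≠ x1) (d02 : x0 ≠ x2) (d03 : x0 ≠ x3) :
    HasInducedCopy G coclawGraph := by
  have h21 := h12.symm; have h31 := h13.symm; have h32 := h23.symm
  have n10 : ¬G.Adj x1 x0 := fun h => n01 h.symm
  have n20 : ¬G.Adj x2 x0 := fun h => n02 h.symm
  have n30 : ¬G.Adj x3 x0 := fun h => n03 h.symm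
  have d12 := h12.ne; have d13 := h13.ne; have d23 := h23.ne
  have d21 := d12.symm; have d31 := d13.symm; have d32 := d23.symm
  have d10 := d01.symm; have d20 := d02.symm; have d30 := d03.symm
  have l0 := G.irrefl (v := x0); have l1 := G.irrefl (v := x1)
  have l2 := G.irrefl (v := x2); have l3 := G.irrefl (v := x3)
  refine ⟨⟨![x0,x1,x2,x3], ?_⟩, ?_⟩
  · intro u v h
    fin_cases u <;> fin_cases v <;>
      first
      | rfl
      | exact absurd h (by assumption)
  · intro u v
    fin_cases u <;> fin_cases v <;>
      first
      | exact iff_of_true (by decide) (by assumption)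
      | exact iff_of_false (by decide) (by assumption)

set_option maxRecDepth 100000 in
set_option synthInstance.maxHeartbeats 1000000 in
set_option synthInstance.maxSize 5000 in
set_option maxHeartbeats 2000000 in
lemma claw_coclaw_key : ∀ f : Fin 3 → Fin 3 → Bool,
    (∀ i, ∃ j, f i j = true) →
    (∀ j, ¬(f 0 j = true ∧ f 1 j = true ∧ f 2 j = true)) →
    (∀ i i' j j', i ≠ i' → j ≠ j' → f i j = true → f i' j = true →
      f i j' = true ∨ f i' j' = true) →
    (∀ i i' j j', i ≠ i' → j ≠ j' → f i j = true → f i j' = true →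
      f i' j = true ∨ f i' j' = true) →
    (∃ g : Fin 3 → Fin 3, (∀ x y, g x = g y → x = y) ∧ ∀ i j, f i j = true ↔ g j = i) ∨
    (∃ g : Fin 3 → Fin 3, (∀ x y, g x = g y → x = y) ∧ ∀ i j, f i j = true ↔ g j ≠ i) := by
  decide

set_option maxHeartbeats 1600000 in
set_option maxRecDepth 10000 in
/-- If a (claw, co-claw)-free graph contains a triangle and an independent set
of size 3 that are vertex-disjoint, then it contains an induced net or an
induced 3-sun. -/
theorem claw_coclaw_net_or_sun {V : Type*} (G : SimpleGraph V)
    (hclaw : ¬ HasInducedCopy G clawGraph)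
    (hcoclaw : ¬ HasInducedCopy G coclawGraph)
    (a b c s₁ s₂ s₃ : V)
    (hab : G.Adj a b) (hac : G.Adj a c) (hbc : G.Adj b c)
    (hs12 : s₁ ≠ s₂) (hs13 : s₁ ≠ s₃) (hs23 : s₂ ≠ s₃)
    (hn12 : ¬G.Adj s₁ s₂) (hn13 : ¬G.Adj s₁ s₃) (hn23 : ¬G.Adj s₂ s₃)
    (hdisj : ∀ s ∈ ({s₁, s₂, s₃} : Set V), s ≠ a ∧ s ≠ b ∧ s ≠ c) :
    HasInducedCopy G netGraph ∨ HasInducedCopy G sunGraph := by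
  classical
  obtain ⟨d1a, d1b, d1c⟩ := hdisj s₁ (by simp)
  obtain ⟨d2a, d2b, d2c⟩ := hdisj s₂ (by simp)
  obtain ⟨d3a, d3b, d3c⟩ := hdisj s₃ (by simp)
  set t : Fin 3 → V := ![a, b, c] with ht
  set s : Fin 3 → V := ![s₁, s₂, s₃] with hs
  -- basic facts
  have htt : ∀ j j', j ≠ j' → G.Adj (t j) (t j') := by
    intro j j' h
    fin_cases j <;> fin_cases j' <;>
      first
      | exact absurd rfl h
      | exact hab | exact hab.symm | exact hac | exact hac.symm
      | exact hbc | exact hbc.symm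
  have hss : ∀ i i', i ≠ i' → ¬G.Adj (s i) (s i') := by
    intro i i' h
    fin_cases i <;> fin_cases i' <;>
      first
      | exact absurd rfl h
      | exact hn12 | exact fun hh => hn12 hh.symm
      | exact hn13 | exact fun hh => hn13 hh.symm
      | exact hn23 | exact fun hh => hn23 hh.symm
  have hsne : ∀ i i', i ≠ i' → s i ≠ s i' := by
    intro i i' h
    fin_cases i <;> fin_cases i' <;>
      first
      | exact absurd rfl h
      | exact hs12 | exact hs12.symm | exact hs13 | exact hs13.symm
      | exact hs23 | exact hs23.symm
  have hst : ∀ i j, s i ≠ t j := by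
    intro i j
    fin_cases i <;> fin_cases j <;> assumption
  have htne : ∀ j j', j ≠ j' → t j ≠ t j' := fun j j' h => (htt j j' h).ne
  -- the boolean adjacency matrix
  set f : Fin 3 → Fin 3 → Bool := fun i j => if G.Adj (s i) (t j) then true else false
    with hfdef
  have hf : ∀ i j, f i j = true ↔ G.Adj (s i) (t j) := by
    intro i j
    simp only [hfdef]
    split_ifs with h <;> simp [h]
  -- C1: every s i has a neighbour in the triangle
  have C1 : ∀ i, ∃ j, f i j = true := by
    intro i
    by_contra h
    push_neg at h
    exact hcoclaw (coclaw_of G (htt 0 1 (by decide)) (htt 0 2 (by decide))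
      (htt 1 2 (by decide))
      (fun hh => (h 0) ((hf i 0).2 hh))
      (fun hh => (h 1) ((hf i 1).2 hh))
      (fun hh => (h 2) ((hf i 2).2 hh))
      (hst i 0) (hst i 1) (hst i 2))
  -- C2: no triangle vertex adjacent to all three s's
  have C2 : ∀ j, ¬(f 0 j = true ∧ f 1 j = true ∧ f 2 j = true) := by
    rintro j ⟨h0, h1, h2⟩
    exact hclaw (claw_of G ((hf 0 j).1 h0).symm ((hf 1 j).1 h1).symm
      ((hf 2 j).1 h2).symm
      (hss 0 1 (by decide)) (hss 0 2 (by decide)) (hss 1 2 (by decide))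
      (hsne 0 1 (by decide)) (hsne 0 2 (by decide)) (hsne 1 2 (by decide)))
  -- C3: claw with centre t j, leaves s i, s i', t j'
  have C3 : ∀ i i' j j', i ≠ i' → j ≠ j' → f i j = true → f i' j = true →
      f i j' = true ∨ f i' j' = true := by
    intro i i' j j' hii hjj h1 h2
    by_contra h
    push_neg at h
    obtain ⟨h3, h4⟩ := h
    exact hclaw (claw_of G ((hf i j).1 h1).symm ((hf i' j).1 h2).symm
      (htt j j' hjj)
      (hss i i' hii)
      (fun hh => h3 ((hf i j').2 hh))
      (fun hh => h4 ((hf i' j').2 hh))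
      (hsne i i' hii) (hst i j') (hst i' j'))
  -- C4: coclaw with triangle s i, t j, t j' and isolated s i'
  have C4 : ∀ i i' j j', i ≠ i' → j ≠ j' → f i j = true → f i j' = true →
      f i' j = true ∨ f i' j' = true := by
    intro i i' j j' hii hjj h1 h2
    by_contra h
    push_neg at h
    obtain ⟨h3, h4⟩ := h
    exact hcoclaw (coclaw_of G ((hf i j).1 h1) ((hf i j').1 h2) (htt j j' hjj)
      (fun hh => hss i' i (Ne.symm hii) hh)
      (fun hh => h3 ((hf i' j).2 hh))
      (fun hh => h4 ((hf i' j').2 hh))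
      (hsne i' i (Ne.symm hii)) (hst i' j) (hst i' j'))
  rcases claw_coclaw_key f C1 C2 C3 C4 with ⟨g, ginj, hg⟩ | ⟨g, ginj, hg⟩
  · -- net
    left
    have hgne : ∀ j j', j ≠ j' → g j ≠ g j' := fun j j' h hh => h (ginj _ _ hh)
    have hA : ∀ j j', G.Adj (t j) (s (g j')) ↔ j = j' := by
      intro j j'
      rw [G.adj_comm, ← hf, hg]
      constructor
      · exact fun h => ginj _ _ h.symm |>.symm
      · rintro rfl; rfl
    have hA' : ∀ j' j, G.Adj (s (g j')) (t j) ↔ j = j' := by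
      intro j' j; rw [G.adj_comm]; exact hA j j'
    have hB : ∀ j j', j ≠ j' → ¬G.Adj (s (g j)) (s (g j')) :=
      fun j j' h => hss _ _ (hgne _ _ h)
    refine ⟨⟨![t 0, t 1, t 2, s (g 0), s (g 1), s (g 2)], ?_⟩, ?_⟩
    · intro u v h
      fin_cases u <;> fin_cases v <;>
        (try norm_num [Matrix.cons_val_succ] at h ⊢) <;>
        first
        | rfl
        | (refine absurd h (htne _ _ ?_); decide)
        | (refine absurd h (hsne _ _ (hgne _ _ ?_)); decide)
        | exact absurd h (hst _ _)
        | exact absurd h (Ne.symm (hst _ _))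
    · intro u v
      change netGraph.Adj u v ↔ G.Adj (![t 0, t 1, t 2, s (g 0), s (g 1), s (g 2)] u) (![t 0, t 1, t 2, s (g 0), s (g 1), s (g 2)] v)
      fin_cases u <;> fin_cases v <;>
        (try norm_num [Matrix.cons_val_succ]) <;>
        first
        | exact iff_of_false (by decide) (G.irrefl)
        | (refine iff_of_true (by decide) (htt _ _ ?_); decide)
        | exact iff_of_true (by decide) ((hA _ _).2 rfl)
        | exact iff_of_true (by decide) ((hA' _ _).2 rfl)
        | (refine iff_of_false (by decide) (fun h => absurd ((hA _ _).1 h) ?_); decide)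
        | (refine iff_of_false (by decide) (fun h => absurd ((hA' _ _).1 h) ?_); decide)
        | (refine iff_of_false (by decide) (hB _ _ ?_); decide)
  · -- sun
    right
    have hgne : ∀ j j', j ≠ j' → g j ≠ g j' := fun j j' h hh => h (ginj _ _ hh)
    have hA : ∀ i j, G.Adj (s (g i)) (t j) ↔ j ≠ i := by
      intro i j
      rw [← hf, hg]
      constructor
      · exact fun h hh => h (hh ▸ rfl)
      · exact fun h hh => h (ginj _ _ hh)
    have hA' : ∀ j i, G.Adj (t j) (s (g i)) ↔ j ≠ i := by
      intro j i; rw [G.adj_comm]; exact hA i j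
    have hB : ∀ i i', i ≠ i' → ¬G.Adj (s (g i)) (s (g i')) :=
      fun i i' h => hss _ _ (hgne _ _ h)
    refine ⟨⟨![s (g 0), s (g 1), s (g 2), t 0, t 1, t 2], ?_⟩, ?_⟩
    · intro u v h
      fin_cases u <;> fin_cases v <;>
        (try norm_num [Matrix.cons_val_succ] at h ⊢) <;>
        first
        | rfl
        | (refine absurd h (htne _ _ ?_); decide)
        | (refine absurd h (hsne _ _ (hgne _ _ ?_)); decide)
        | exact absurd h (hst _ _)
        | exact absurd h (Ne.symm (hst _ _))
    · intro u v
      change sunGraph.Adj u v ↔ G.Adj (![s (g 0), s (g 1), s (g 2), t 0, t 1, t 2] u) (![s (g 0), s (g 1), s (g 2), t 0, t 1, t 2] v)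
      fin_cases u <;> fin_cases v <;>
        (try norm_num [Matrix.cons_val_succ]) <;>
        first
        | exact iff_of_false (by decide) (G.irrefl)
        | (refine iff_of_true (by decide) (htt _ _ ?_); decide)
        | (refine iff_of_true (by decide) ((hA _ _).2 ?_); decide)
        | (refine iff_of_true (by decide) ((hA' _ _).2 ?_); decide)
        | (refine iff_of_false (by decide) (fun h => absurd ((hA _ _).1 h) ?_); decide)
        | (refine iff_of_false (by decide) (fun h => absurd ((hA' _ _).1 h) ?_); decide)
        | (refine iff_of_false (by decide) (hB _ _ ?_); decide)
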